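/- Fix N, K ≥ 1, local model parameters θ_1, …, θ_N ∈ ℝ^n, and real constants c_{i,j} for i, j ∈ {1,…,N} (representing the empirical transfer losses E_{(x,y)∼P̂_i}[|θ_j^⊤x − y|]). Let 𝒜 be the set of feasible binary assignments a = (a_{i,k}) ∈ {0,1}^{N×K} with Σ_{k=1}^K a_{i,k} = 1 for every i and Σ_{i=1}^N a_{i,k} ≥ 1 for every k. For ε ≥ 0 define the objective J_ε(a) = Σ_{k=1}^K Σ_{i=1}^N Σ_{j=1}^N (a_{i,k} · a_{j,k} / Σ_{j'=1}^N a_{j',k}) · (ε · √(‖θ_j‖₂² + 1) + c_{i,j}). Then the set of minimizers argmin_{a ∈ 𝒜} J_ε(a) is the same for every ε ≥ 0; i.e., the optimal coalition structure is independent of the common ambiguity-set radius ε. -/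

import Mathlib

lemma key_sum {N K : ℕ} (a : Fin N → Fin K → ℕ) (s : Fin N → ℝ)
    (h2 : ∀ i, ∑ k, a i k = 1) (h3 : ∀ k, 1 ≤ ∑ i, a i k) :
    ∑ k, ∑ i, ∑ j,
      ((a i k : ℝ) * (a j k : ℝ) / ((∑ j', a j' k : ℕ) : ℝ)) * s j = ∑ j, s j := by
  have hinner : ∀ k, ∑ i, ∑ j,
      ((a i k : ℝ) * (a j k : ℝ) / ((∑ j', a j' k : ℕ) : ℝ)) * s j
      = ∑ j, (a j k : ℝ) * s j := by
    intro k
    have hd : ((∑ j', a j' k : ℕ) : ℝ) ≠ 0 := by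
      have := h3 k
      positivity
    calc ∑ i, ∑ j, ((a i k : ℝ) * (a j k : ℝ) / ((∑ j', a j' k : ℕ) : ℝ)) * s j
        = ∑ i, (a i k : ℝ) / ((∑ j', a j' k : ℕ) : ℝ) * ∑ j, (a j k : ℝ) * s j := by
          refine Finset.sum_congr rfl fun i _ => ?_
          rw [Finset.mul_sum]
          exact Finset.sum_congr rfl fun j _ => by ring
      _ = (∑ i, (a i k : ℝ)) / ((∑ j', a j' k : ℕ) : ℝ) * ∑ j, (a j k : ℝ) * s j := by
          rw [← Finset.sum_mul, ← Finset.sum_div]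
      _ = ∑ j, (a j k : ℝ) * s j := by
          rw [← Nat.cast_sum, div_self hd, one_mul]
  rw [Finset.sum_congr rfl fun k _ => hinner k, Finset.sum_comm]
  refine Finset.sum_congr rfl fun j _ => ?_
  rw [← Finset.sum_mul, ← Nat.cast_sum, h2 j, Nat.cast_one, one_mul]

/-- **Proposition 1 (CS-RCFL, linear regression with absolute loss).** If all hospitals
use the same Wasserstein radius `ε ≥ 0`, the set of optimal coalition structures for the
coalition-formation problem is independent of `ε`. -/
theorem argmin_coalition_independent_of_radius
    {n N K : ℕ} (hN : 1 ≤ N) (hK : 1 ≤ K)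
    (θ : Fin N → EuclideanSpace ℝ (Fin n))
    (c : Fin N → Fin N → ℝ)
    (A : Set (Fin N → Fin K → ℕ))
    (hA : A = {a | (∀ i k, a i k = 0 ∨ a i k = 1) ∧ (∀ i, ∑ k, a i k = 1) ∧
      (∀ k, 1 ≤ ∑ i, a i k)})
    (J : ℝ → (Fin N → Fin K → ℕ) → ℝ)
    (hJ : ∀ ε a, J ε a = ∑ k, ∑ i, ∑ j,
        ((a i k : ℝ) * (a j k : ℝ) / ((∑ j', a j' k : ℕ) : ℝ)) *
          (ε * Real.sqrt (‖θ j‖ ^ 2 + 1) + c i j)) :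
    ∀ ε₁ ε₂ : ℝ, 0 ≤ ε₁ → 0 ≤ ε₂ →
      {a ∈ A | ∀ b ∈ A, J ε₁ a ≤ J ε₁ b} = {a ∈ A | ∀ b ∈ A, J ε₂ a ≤ J ε₂ b} := by
  -- For any feasible `a`, `J ε a = ε * S + J 0 a` where `S = ∑ j √(‖θ j‖² + 1)`.
  have hsplit : ∀ ε : ℝ, ∀ a ∈ A,
      J ε a = ε * (∑ j, Real.sqrt (‖θ j‖ ^ 2 + 1)) + J 0 a := by
    intro ε a ha
    rw [hA] at ha
    obtain ⟨h1, h2, h3⟩ := ha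
    have hk := key_sum a (fun j => Real.sqrt (‖θ j‖ ^ 2 + 1)) h2 h3
    have expand : ∀ ε' : ℝ, J ε' a =
        ε' * (∑ k, ∑ i, ∑ j, ((a i k : ℝ) * (a j k : ℝ) / ((∑ j', a j' k : ℕ) : ℝ)) *
          Real.sqrt (‖θ j‖ ^ 2 + 1)) +
        ∑ k, ∑ i, ∑ j, ((a i k : ℝ) * (a j k : ℝ) / ((∑ j', a j' k : ℕ) : ℝ)) * c i j := by
      intro ε'
      rw [hJ, Finset.mul_sum, ← Finset.sum_add_distrib]
      refine Finset.sum_congr rfl fun k _ => ?_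
      rw [Finset.mul_sum, ← Finset.sum_add_distrib]
      refine Finset.sum_congr rfl fun i _ => ?_
      rw [Finset.mul_sum, ← Finset.sum_add_distrib]
      exact Finset.sum_congr rfl fun j _ => by ring
    rw [expand ε, expand 0, hk]
    ring
  intro ε₁ ε₂ _ _
  ext a
  simp only [Set.mem_setOf_eq, Set.mem_sep_iff]
  constructor
  · rintro ⟨ha, h⟩
    refine ⟨ha, fun b hb => ?_⟩
    have := h b hb
    rw [hsplit ε₁ a ha, hsplit ε₁ b hb] at this
    rw [hsplit ε₂ a ha, hsplit ε₂ b hb]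
    linarith
  · rintro ⟨ha, h⟩
    refine ⟨ha, fun b hb => ?_⟩
    have := h b hb
    rw [hsplit ε₂ a ha, hsplit ε₂ b hb] at this
    rw [hsplit ε₁ a ha, hsplit ε₁ b hb]
    linarith
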